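/- Bias decomposition theorem: Let w, w* : S → ℝ have sample mean 1 over the nonempty finite set S, let Y : S → ℝ, and let ε = w − w* satisfy cov_S(w, ε) = 0 with var_S(w*) > 0 and var_S(ε) > 0, var_S(Y) > 0. Set R²_ε = var_S(ε)/var_S(w*) and ρ = cov_S(ε,Y)/sqrt(var_S(ε)var_S(Y)). If R²_ε < 1, then E_S[w·Y] − E_S[w*·Y] = ρ · sqrt( var_S(Y) · var_S(w) · R²_ε/(1 − R²_ε) ). -/

import Mathlib

open scoped BigOperators

variable {S : Type*} [Fintype S] [Nonempty S]

/-- Sample mean over the finite sample `S`. -/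
noncomputable def mS (f : S → ℝ) : ℝ := (∑ i, f i) / (Fintype.card S : ℝ)

/-- Sample covariance over `S`. -/
noncomputable def covS (f g : S → ℝ) : ℝ := mS (fun i => f i * g i) - mS f * mS g

/-- Sample variance over `S`. -/
noncomputable def varS (f : S → ℝ) : ℝ := covS f f

private lemma mS_sub (f g : S → ℝ) : mS (fun i => f i - g i) = mS f - mS g := by
  unfold mS
  rw [Finset.sum_sub_distrib]
  ring

private lemma covS_sub_left (f g h : S → ℝ) :
    covS (fun i => f i - g i) h = covS f h - covS g h := by
  unfold covS
  rw [mS_sub]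
  have : mS (fun i => (f i - g i) * h i)
      = mS (fun i => f i * h i) - mS (fun i => g i * h i) := by
    rw [← mS_sub]; congr 1; funext i; ring
  rw [this]; ring

private lemma covS_comm (f g : S → ℝ) : covS f g = covS g f := by
  unfold covS
  simp only [mul_comm]

private lemma covS_sub_right (f g h : S → ℝ) :
    covS f (fun i => g i - h i) = covS f g - covS f h := by
  rw [covS_comm, covS_sub_left, covS_comm g f, covS_comm h f]

theorem bias_decomposition (w wstar Y : S → ℝ)
    (hw : mS w = 1) (hws : mS wstar = 1)
    (hproj : covS w (fun i => w i - wstar i) = 0)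
    (hvws : 0 < varS wstar)
    (hveps : 0 < varS (fun i => w i - wstar i))
    (hvY : 0 < varS Y)
    (hR2 : varS (fun i => w i - wstar i) / varS wstar < 1) :
    mS (fun i => w i * Y i) - mS (fun i => wstar i * Y i)
      = (covS (fun i => w i - wstar i) Y
            / Real.sqrt (varS (fun i => w i - wstar i) * varS Y))
        * Real.sqrt (varS Y * varS w *
            ((varS (fun i => w i - wstar i) / varS wstar)
              / (1 - varS (fun i => w i - wstar i) / varS wstar))) := by
  set ε : S → ℝ := fun i => w i - wstar i with hεdef
  -- LHS equals covS ε Y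
  have hmε : mS ε = 0 := by rw [hεdef, mS_sub, hw, hws]; ring
  have hLHS : mS (fun i => w i * Y i) - mS (fun i => wstar i * Y i) = covS ε Y := by
    have : covS ε Y = mS (fun i => ε i * Y i) - mS ε * mS Y := rfl
    rw [this, hmε]
    have : mS (fun i => ε i * Y i)
        = mS (fun i => w i * Y i) - mS (fun i => wstar i * Y i) := by
      rw [← mS_sub]; congr 1; funext i; simp [hεdef]; ring
    rw [this]; ring
  -- variance identity: varS w = varS wstar - varS ε
  have hcw : covS w w = covS w wstar := by
    have := hproj
    rw [hεdef, covS_sub_right] at this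
    linarith
  have hveq : varS w = varS wstar - varS ε := by
    have h1 : varS ε = covS ε ε := rfl
    have h2 : covS ε ε = covS w w - 2 * covS w wstar + covS wstar wstar := by
      rw [hεdef, covS_sub_left, covS_sub_right, covS_sub_right,
        covS_comm wstar w]
      ring
    have h3 : varS w = covS w w := rfl
    have h4 : varS wstar = covS wstar wstar := rfl
    rw [h1, h2, h3, h4, ← hcw]
    ring
  have hvwsne : varS wstar ≠ 0 := ne_of_gt hvws
  have hεlt : varS ε < varS wstar := by
    have := (div_lt_one hvws).mp hR2
    exact this
  have hvw : 0 < varS w := by rw [hveq]; linarith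
  -- simplify the argument of the second sqrt
  have harg : varS Y * varS w *
      ((varS ε / varS wstar) / (1 - varS ε / varS wstar))
      = varS ε * varS Y := by
    have h1 : 1 - varS ε / varS wstar = varS w / varS wstar := by
      field_simp
      linarith [hveq]
    rw [h1]
    field_simp
  rw [hLHS, harg]
  have hs : Real.sqrt (varS ε * varS Y) ≠ 0 := by
    apply ne_of_gt
    apply Real.sqrt_pos.mpr
    positivity
  field_simp
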